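/- For the first Ding–Helleseth sequence, the product over a ∈ P satisfies Π_{a ∈ P} S(ξ_N^a) = ((p−1)²·η₀^{(q)}·η₁^{(q)} + p)^{(q−1)/2}. -/

import Mathlib

open Finset

/-- `ξ_N = exp(2πi/N)`, a primitive `N`-th root of unity. -/
noncomputable def DHxi (N : ℕ) : ℂ := Complex.exp (2 * Real.pi * Complex.I / N)

/-- Gauss period: `Σ_{a ∈ D} ξ_N^a`. -/
noncomputable def DHeta (N : ℕ) (D : Finset (ZMod N)) : ℂ := ∑ a ∈ D, DHxi N ^ a.val

/-- Ding–Helleseth generalized cyclotomic class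
`D₀ = {g^(2t) x^i : 0 ≤ t ≤ e/2 - 1, i ∈ {0,1}}` in `ZMod (p*q)`, where `e = (p-1)(q-1)/2`. -/
def DHD0 (p q g x : ℕ) : Finset (ZMod (p * q)) :=
  (Finset.range ((p - 1) * (q - 1) / 4) ×ˢ Finset.range 2).image
    (fun ti => (g : ZMod (p * q)) ^ (2 * ti.1) * (x : ZMod (p * q)) ^ ti.2)

/-- `D₁ = g · D₀`. -/
def DHD1 (p q g x : ℕ) : Finset (ZMod (p * q)) :=
  (DHD0 p q g x).image (fun d => (g : ZMod (p * q)) * d)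

/-- `P = {p, 2p, …, (q-1)p}` as a subset of `ZMod (p*q)`. -/
def DHP (p q : ℕ) : Finset (ZMod (p * q)) :=
  (Finset.Icc 1 (q - 1)).image (fun k => ((k * p : ℕ) : ZMod (p * q)))

/-- `Q = {q, 2q, …, (p-1)q}` as a subset of `ZMod (p*q)`. -/
def DHQ (p q : ℕ) : Finset (ZMod (p * q)) :=
  (Finset.Icc 1 (p - 1)).image (fun k => ((k * q : ℕ) : ZMod (p * q)))

/-- First Ding–Helleseth sequence: `s_i = 1` iff `i mod N ∈ D₁ ∪ P`. -/
def DHs1 (p q g x : ℕ) (i : ℕ) : ℕ :=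
  if (i : ZMod (p * q)) ∈ DHD1 p q g x ∪ DHP p q then 1 else 0

/-- Second Ding–Helleseth sequence: `s_i = 1` iff `i mod N ∈ D₁ ∪ Q`. -/
def DHs2 (p q g x : ℕ) (i : ℕ) : ℕ :=
  if (i : ZMod (p * q)) ∈ DHD1 p q g x ∪ DHQ p q then 1 else 0

/-- Circulant matrix of the first sequence: `a_{i,j} = s_{(i-j) mod N}`. -/
noncomputable def DHA1 (p q g x : ℕ) : Matrix (Fin (p * q)) (Fin (p * q)) ℂ :=
  fun i j => (DHs1 p q g x ((((i : ℕ) : ZMod (p * q)) - ((j : ℕ) : ZMod (p * q))).val) : ℂ)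

/-- Circulant matrix of the second sequence: `a_{i,j} = s_{(i-j) mod N}`. -/
noncomputable def DHA2 (p q g x : ℕ) : Matrix (Fin (p * q)) (Fin (p * q)) ℂ :=
  fun i j => (DHs2 p q g x ((((i : ℕ) : ZMod (p * q)) - ((j : ℕ) : ZMod (p * q))).val) : ℂ)

/-- `S(z) = Σ_{i=0}^{N-1} s_i z^i` for the first sequence. -/
noncomputable def DHSval1 (p q g x : ℕ) (z : ℂ) : ℂ :=
  ∑ i ∈ Finset.range (p * q), (DHs1 p q g x i : ℂ) * z ^ i

/-- `S(z) = Σ_{i=0}^{N-1} s_i z^i` for the second sequence. -/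
noncomputable def DHSval2 (p q g x : ℕ) (z : ℂ) : ℂ :=
  ∑ i ∈ Finset.range (p * q), (DHs2 p q g x i : ℂ) * z ^ i

/-- `S(2) = Σ_{i=0}^{N-1} s_i 2^i` for the first sequence, as a natural number. -/
def DHS2num1 (p q g x : ℕ) : ℕ := ∑ i ∈ Finset.range (p * q), DHs1 p q g x i * 2 ^ i

/-- `S(2) = Σ_{i=0}^{N-1} s_i 2^i` for the second sequence, as a natural number. -/
def DHS2num2 (p q g x : ℕ) : ℕ := ∑ i ∈ Finset.range (p * q), DHs2 p q g x i * 2 ^ i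

/-- Nonzero quadratic residues modulo `q`. -/
def DHQR (q : ℕ) [NeZero q] : Finset (ZMod q) :=
  Finset.univ.filter (fun a => a ≠ 0 ∧ ∃ b : ZMod q, b * b = a)

/-- Quadratic nonresidues modulo `q`. -/
def DHQNR (q : ℕ) [NeZero q] : Finset (ZMod q) :=
  Finset.univ.filter (fun a => a ≠ 0 ∧ ¬∃ b : ZMod q, b * b = a)

section DH1Aux

open Finset

lemma DH1.isPrim {q : ℕ} (hq : q ≠ 0) : IsPrimitiveRoot (DHxi q) q := by
  simpa [DHxi] using Complex.isPrimitiveRoot_exp q hq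

lemma DH1.omega_pow_q {q : ℕ} (hq : q ≠ 0) : (DHxi q) ^ q = 1 :=
  (DH1.isPrim hq).pow_eq_one

lemma DH1.pow_mod {q : ℕ} (hq : q ≠ 0) (m : ℕ) : DHxi q ^ m = DHxi q ^ (m % q) := by
  conv_lhs => rw [← Nat.div_add_mod m q]
  rw [pow_add, pow_mul, DH1.omega_pow_q hq, one_pow, one_mul]

lemma DH1.psi_natCast {q : ℕ} [NeZero q] (m : ℕ) :
    DHxi q ^ m = DHxi q ^ ((m : ZMod q)).val := by
  rw [ZMod.val_natCast, ← DH1.pow_mod (NeZero.ne q)]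

lemma DH1.geom_zero {q : ℕ} (hq1 : 1 < q) {z : ℂ} (hz : z ≠ 1) (hzq : z ^ q = 1) :
    ∑ i ∈ Finset.range q, z ^ i = 0 := by
  rw [geom_sum_eq hz, hzq, sub_self, zero_div]

lemma DH1.dhxi_pow_p {p q : ℕ} (hp : p ≠ 0) (hq : q ≠ 0) : DHxi (p*q) ^ p = DHxi q := by
  rw [DHxi, DHxi, ← Complex.exp_nat_mul]
  congr 1
  have hp' : (p:ℂ) ≠ 0 := Nat.cast_ne_zero.2 hp
  have hq' : (q:ℂ) ≠ 0 := Nat.cast_ne_zero.2 hq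
  push_cast
  field_simp

lemma DH1.gne {r h : ℕ} (hr : 1 < r) (hh : orderOf (h : ZMod r) = r - 1) :
    (h : ZMod r) ≠ 0 := by
  haveI := Fact.mk hr
  intro h0
  have h1 : (h : ZMod r) ^ (r - 1) = 1 := by rw [← hh]; exact pow_orderOf_eq_one _
  rw [h0, zero_pow (by omega)] at h1
  exact zero_ne_one h1

lemma DH1.unit {r h : ℕ} (hr : Nat.Prime r) (hh : orderOf (h : ZMod r) = r - 1) :
    IsUnit (h : ZMod r) := by
  haveI := Fact.mk hr
  exact isUnit_iff_ne_zero.mpr (DH1.gne hr.one_lt hh)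

lemma DH1.gpow_iff {r h : ℕ} (hr : Nat.Prime r) (hh : orderOf (h : ZMod r) = r - 1)
    (a b : ℕ) : (h : ZMod r) ^ a = (h : ZMod r) ^ b ↔ a ≡ b [MOD r - 1] := by
  haveI := Fact.mk hr
  have hu := DH1.unit hr hh
  have hval : (hu.unit : ZMod r) = (h : ZMod r) := hu.unit_spec
  have hord : orderOf hu.unit = r - 1 := by rw [← orderOf_units, hval, hh]
  have key : ∀ c : ℕ, (h : ZMod r) ^ c = ((hu.unit ^ c : (ZMod r)ˣ) : ZMod r) := by
    intro c; rw [Units.val_pow_eq_pow_val, hval]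
  rw [key a, key b]
  constructor
  · intro hab
    have : hu.unit ^ a = hu.unit ^ b := Units.ext hab
    simpa [hord] using pow_eq_pow_iff_modEq.mp this
  · intro hab
    have : hu.unit ^ a = hu.unit ^ b := pow_eq_pow_iff_modEq.mpr (by simpa [hord] using hab)
    rw [this]

lemma DH1.dlog {r h : ℕ} (hr : Nat.Prime r) (hh : orderOf (h : ZMod r) = r - 1)
    {d : ZMod r} (hd : d ≠ 0) : ∃ m, m < r - 1 ∧ (h : ZMod r) ^ m = d := by
  haveI := Fact.mk hr
  have hu := DH1.unit hr hh
  have hval : (hu.unit : ZMod r) = (h : ZMod r) := hu.unit_spec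
  have hord : orderOf hu.unit = r - 1 := by rw [← orderOf_units, hval, hh]
  have htop : Subgroup.zpowers hu.unit = ⊤ := by
    apply Subgroup.eq_top_of_card_eq
    rw [Nat.card_zpowers, hord, Nat.card_eq_fintype_card, ZMod.card_units]
  have hdu := isUnit_iff_ne_zero.mpr hd
  have hmem : hdu.unit ∈ Subgroup.zpowers hu.unit := by rw [htop]; trivial
  rw [← mem_powers_iff_mem_zpowers] at hmem
  obtain ⟨n, hn⟩ := hmem
  have hn' : hu.unit ^ n = hdu.unit := hn
  refine ⟨n % (r-1), Nat.mod_lt _ (by have := hr.two_le; omega), ?_⟩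
  have hval2 : (h : ZMod r) ^ n = d := by
    rw [← hval, ← Units.val_pow_eq_pow_val, hn', hdu.unit_spec]
  rw [← hval2, ← hh, pow_mod_orderOf]

lemma DH1.pow_reduce {r h : ℕ} (hr : Nat.Prime r) (hro : Odd r)
    (hh : orderOf (h : ZMod r) = r - 1) (m j : ℕ) :
    (h : ZMod r) ^ (2 * (m % ((r-1)/2)) + j) = (h : ZMod r) ^ (2 * m + j) := by
  rw [DH1.gpow_iff hr hh]
  have h2 : r - 1 = 2 * ((r-1)/2) := by obtain ⟨c, hc⟩ := hro; omega
  have h3 := ((Nat.mod_modEq m ((r-1)/2)).mul_left' (c := 2)).add_right j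
  rwa [← h2] at h3

lemma DH1.even_pow_sq {r h : ℕ} (v : ℕ) : ∃ b : ZMod r, b * b = (h : ZMod r) ^ (2*v) :=
  ⟨(h:ZMod r)^v, by rw [← pow_add, ← two_mul]⟩

lemma DH1.odd_pow_not_sq {r h : ℕ} (hr : Nat.Prime r) (hro : Odd r)
    (hh : orderOf (h : ZMod r) = r - 1) (v : ℕ) :
    ¬ ∃ b : ZMod r, b * b = (h : ZMod r) ^ (2*v+1) := by
  haveI := Fact.mk hr
  rintro ⟨d, hd⟩
  have hd0 : d ≠ 0 := by
    intro h0; rw [h0, mul_zero] at hd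
    exact (pow_ne_zero _ (DH1.gne hr.one_lt hh)) hd.symm
  obtain ⟨m, -, rfl⟩ := DH1.dlog hr hh hd0
  rw [← pow_add, DH1.gpow_iff hr hh] at hd
  have h2 : (2:ℕ) ∣ r - 1 := by obtain ⟨c, hc⟩ := hro; omega
  have h3 : (m + m) % 2 = (2*v+1) % 2 := Nat.ModEq.of_dvd h2 hd
  omega

lemma DH1.QR_eq {q g : ℕ} [NeZero q] (hq : Nat.Prime q) (hqo : Odd q)
    (hgq : orderOf (g : ZMod q) = q - 1) :
    DHQR q = (Finset.range ((q-1)/2)).image (fun v => (g : ZMod q) ^ (2*v)) := by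
  haveI := Fact.mk hq
  ext c
  simp only [DHQR, mem_filter, mem_univ, true_and, mem_image, mem_range]
  constructor
  · rintro ⟨hc0, d, hd⟩
    have hd0 : d ≠ 0 := by rintro rfl; rw [mul_zero] at hd; exact hc0 hd.symm
    obtain ⟨m, -, rfl⟩ := DH1.dlog hq hgq hd0
    refine ⟨m % ((q-1)/2), Nat.mod_lt _ (by have := hq.two_le; obtain ⟨c,hc⟩ := hqo; omega), ?_⟩
    have hred := DH1.pow_reduce hq hqo hgq m 0
    simp only [add_zero] at hred
    rw [hred, two_mul, pow_add]
    exact hd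
  · rintro ⟨v, -, rfl⟩
    exact ⟨pow_ne_zero _ (DH1.gne hq.one_lt hgq), DH1.even_pow_sq v⟩

lemma DH1.NQR_eq {q g : ℕ} [NeZero q] (hq : Nat.Prime q) (hqo : Odd q)
    (hgq : orderOf (g : ZMod q) = q - 1) :
    DHQNR q = (Finset.range ((q-1)/2)).image (fun v => (g : ZMod q) ^ (2*v+1)) := by
  haveI := Fact.mk hq
  ext c
  simp only [DHQNR, mem_filter, mem_univ, true_and, mem_image, mem_range]
  constructor
  · rintro ⟨hc0, hns⟩
    obtain ⟨m, hm, rfl⟩ := DH1.dlog hq hgq hc0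
    have hmo : m % 2 = 1 := by
      rcases Nat.even_or_odd m with ⟨w, rfl⟩ | ho
      · exact (hns ⟨(g:ZMod q)^w, by rw [← pow_add]⟩).elim
      · obtain ⟨w, rfl⟩ := ho; omega
    obtain ⟨w, rfl⟩ : ∃ w, m = 2*w+1 := ⟨m/2, by omega⟩
    exact ⟨w % ((q-1)/2), Nat.mod_lt _ (by have := hq.two_le; obtain ⟨c,hc⟩ := hqo; omega),
      DH1.pow_reduce hq hqo hgq w 1⟩
  · rintro ⟨v, -, rfl⟩
    exact ⟨pow_ne_zero _ (DH1.gne hq.one_lt hgq), DH1.odd_pow_not_sq hq hqo hgq v⟩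

lemma DH1.QR_injOn {q g : ℕ} (hq : Nat.Prime q) (hqo : Odd q)
    (hgq : orderOf (g : ZMod q) = q - 1) :
    ∀ v ∈ Finset.range ((q-1)/2), ∀ w ∈ Finset.range ((q-1)/2),
      (g : ZMod q) ^ (2*v) = (g : ZMod q) ^ (2*w) → v = w := by
  intro v hv w hw hvw
  rw [DH1.gpow_iff hq hgq] at hvw
  simp only [mem_range] at hv hw
  have hb : q - 1 = 2 * ((q-1)/2) := by obtain ⟨c, hc⟩ := hqo; omega
  have h1 : (2*v) % (q-1) = (2*w) % (q-1) := hvw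
  rw [Nat.mod_eq_of_lt (by omega), Nat.mod_eq_of_lt (by omega)] at h1
  omega

lemma DH1.NQR_injOn {q g : ℕ} (hq : Nat.Prime q) (hqo : Odd q)
    (hgq : orderOf (g : ZMod q) = q - 1) :
    ∀ v ∈ Finset.range ((q-1)/2), ∀ w ∈ Finset.range ((q-1)/2),
      (g : ZMod q) ^ (2*v+1) = (g : ZMod q) ^ (2*w+1) → v = w := by
  intro v hv w hw hvw
  rw [DH1.gpow_iff hq hgq] at hvw
  simp only [mem_range] at hv hw
  have hb : q - 1 = 2 * ((q-1)/2) := by obtain ⟨c, hc⟩ := hqo; omega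
  have h1 : (2*v+1) % (q-1) = (2*w+1) % (q-1) := hvw
  rw [Nat.mod_eq_of_lt (by omega), Nat.mod_eq_of_lt (by omega)] at h1
  omega

lemma DH1.QR_card {q g : ℕ} [NeZero q] (hq : Nat.Prime q) (hqo : Odd q)
    (hgq : orderOf (g : ZMod q) = q - 1) : (DHQR q).card = (q-1)/2 := by
  rw [DH1.QR_eq (g := g) hq hqo hgq,
    Finset.card_image_of_injOn
      (fun a ha b hb h => DH1.QR_injOn hq hqo hgq a (Finset.mem_coe.mp ha) b (Finset.mem_coe.mp hb) h),
    Finset.card_range]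

lemma DH1.NQR_card {q g : ℕ} [NeZero q] (hq : Nat.Prime q) (hqo : Odd q)
    (hgq : orderOf (g : ZMod q) = q - 1) : (DHQNR q).card = (q-1)/2 := by
  rw [DH1.NQR_eq (g := g) hq hqo hgq,
    Finset.card_image_of_injOn
      (fun a ha b hb h => DH1.NQR_injOn hq hqo hgq a (Finset.mem_coe.mp ha) b (Finset.mem_coe.mp hb) h),
    Finset.card_range]

lemma DH1.QR_union (q : ℕ) [NeZero q] :
    Finset.univ.filter (fun a : ZMod q => a ≠ 0) = DHQR q ∪ DHQNR q := by
  ext a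
  simp only [DHQR, DHQNR, mem_union, mem_filter, mem_univ, true_and]
  tauto

lemma DH1.QRdisj (q : ℕ) [NeZero q] : Disjoint (DHQR q) (DHQNR q) := by
  rw [Finset.disjoint_left]
  intro a h1 h2
  simp only [DHQR, DHQNR, mem_filter, mem_univ, true_and] at h1 h2
  exact h2.2 h1.2

lemma DH1.sum_zmod (n : ℕ) [NeZero n] (f : ZMod n → ℂ) :
    ∑ a : ZMod n, f a = ∑ i ∈ Finset.range n, f (i : ZMod n) := by
  refine Finset.sum_nbij' (fun a => a.val) (fun i => ((i : ZMod n))) ?_ ?_ ?_ ?_ ?_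
  · intro a _; exact mem_range.mpr (ZMod.val_lt a)
  · intro i _; exact mem_univ _
  · intro a _; simp [ZMod.natCast_val, ZMod.cast_id]
  · intro i hi; exact ZMod.val_cast_of_lt (mem_range.mp hi)
  · intro a _; simp [ZMod.natCast_val, ZMod.cast_id]

lemma DH1.eta_sum {q : ℕ} [NeZero q] (hq : Nat.Prime q) :
    DHeta q (DHQR q) + DHeta q (DHQNR q) = -1 := by
  have hq1 : 1 < q := hq.one_lt
  rw [DHeta, DHeta, ← Finset.sum_union (DH1.QRdisj q), ← DH1.QR_union q]
  have h0 : ∑ a ∈ Finset.univ.filter (fun a : ZMod q => a ≠ 0), DHxi q ^ a.val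
      = (∑ a : ZMod q, DHxi q ^ a.val) - DHxi q ^ (0 : ZMod q).val := by
    rw [← Finset.sum_filter_add_sum_filter_not Finset.univ (fun a : ZMod q => a ≠ 0)
      (fun a => DHxi q ^ a.val)]
    have hsingle : Finset.univ.filter (fun a : ZMod q => ¬ a ≠ 0) = {0} := by
      ext a; simp
    rw [hsingle, Finset.sum_singleton]
    ring
  rw [h0, DH1.sum_zmod]
  have hcongr : ∀ i ∈ Finset.range q, DHxi q ^ ((i : ZMod q)).val = DHxi q ^ i :=
    fun i hi => by rw [ZMod.val_cast_of_lt (mem_range.mp hi)]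
  rw [Finset.sum_congr rfl hcongr,
    DH1.geom_zero hq1 ((DH1.isPrim (NeZero.ne q)).ne_one hq1) (DH1.omega_pow_q (NeZero.ne q))]
  norm_num [ZMod.val_zero]

lemma DH1.periodic_sum (G : ℕ → ℂ) (b : ℕ) (hG : ∀ t, G (t + b) = G t) (a : ℕ) :
    ∑ t ∈ Finset.range (a*b), G t = (a : ℂ) * ∑ t ∈ Finset.range b, G t := by
  have hGk : ∀ k i, G (i + k*b) = G i := by
    intro k
    induction k with
    | zero => simp
    | succ n ih =>
      intro i
      have h1 : i + (n+1)*b = (i + n*b) + b := by ring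
      rw [h1, hG, ih]
  induction a with
  | zero => simp
  | succ n ih =>
    have h1 : (n+1)*b = n*b + b := by ring
    have h2 : ∑ i ∈ Finset.Ico (n*b) (n*b + b), G i = ∑ t ∈ Finset.range b, G t := by
      rw [Finset.sum_Ico_eq_sum_range, show n*b + b - n*b = b by omega]
      exact Finset.sum_congr rfl (fun i _ => by rw [add_comm (n*b) i, hGk n i])
    rw [h1, Finset.range_eq_Ico,
      ← Finset.sum_Ico_consecutive _ (Nat.zero_le (n*b)) (Nat.le_add_right _ _), h2,
      ← Finset.range_eq_Ico, ih]
    push_cast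
    ring

lemma DH1.periodic_shift (G : ℕ → ℂ) (b : ℕ) (hG : ∀ t, G (t + b) = G t) (w : ℕ) :
    ∑ v ∈ Finset.range b, G (w + v) = ∑ v ∈ Finset.range b, G v := by
  induction w with
  | zero => simp
  | succ n ih =>
    rw [← ih]
    have h12 : (∑ v ∈ Finset.range b, G (n + v)) + G (n + b)
        = (∑ v ∈ Finset.range b, G (n + (v+1))) + G (n + 0) := by
      rw [← Finset.sum_range_succ (fun v => G (n + v)) b]
      exact Finset.sum_range_succ' (fun v => G (n + v)) b
    rw [hG n, Nat.add_zero] at h12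
    have h4 : (∑ v ∈ Finset.range b, G (n + (v+1))) = ∑ v ∈ Finset.range b, G (n+1+v) :=
      Finset.sum_congr rfl (fun v _ => by rw [show n+(v+1) = n+1+v by omega])
    rw [← h4]
    exact (add_right_cancel h12).symm

end DH1Aux
section DH1Aux2

open Finset

lemma DH1.e2_eq {p q : ℕ} (hpo : Odd p) (hqo : Odd q) :
    (p-1)*(q-1)/4 = ((p-1)/2) * ((q-1)/2) := by
  obtain ⟨u, rfl⟩ := hpo
  obtain ⟨v, rfl⟩ := hqo
  simp only [Nat.add_sub_cancel]
  have h4 : 2*u*(2*v) = 4*(u*v) := by ring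
  rw [h4, Nat.mul_div_cancel_left _ (by norm_num)]
  have hu2 : 2*u/2 = u := by omega
  have hv2 : 2*v/2 = v := by omega
  rw [hu2, hv2]

lemma DH1.D0_inj {p q g x : ℕ} (hp : Nat.Prime p) (hq : Nat.Prime q)
    (hpo : Odd p) (hqo : Odd q) (hgcd : Nat.gcd (p-1) (q-1) = 2)
    (hgp : orderOf (g : ZMod p) = p - 1) (hgq : orderOf (g : ZMod q) = q - 1)
    (hxp : (x : ZMod p) = (g : ZMod p)) (hxq : (x : ZMod q) = 1) :
    ∀ a ∈ Finset.range ((p-1)*(q-1)/4) ×ˢ Finset.range 2,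
      ∀ b ∈ Finset.range ((p-1)*(q-1)/4) ×ˢ Finset.range 2,
        ((g : ZMod (p*q)) ^ (2*a.1) * (x : ZMod (p*q)) ^ a.2
          = (g : ZMod (p*q)) ^ (2*b.1) * (x : ZMod (p*q)) ^ b.2) → a = b := by
  rintro ⟨t, i⟩ ha ⟨s, j⟩ hb heq
  simp only [Finset.mem_product, Finset.mem_range, DH1.e2_eq hpo hqo] at ha hb
  obtain ⟨ht, hi⟩ := ha
  obtain ⟨hs, hj⟩ := hb
  have hq' : (g : ZMod q) ^ (2*t) = (g : ZMod q) ^ (2*s) := by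
    have hcast := congrArg (ZMod.castHom (dvd_mul_left q p) (ZMod q)) heq
    simpa [map_mul, map_pow, map_natCast, hxq, one_pow, mul_one] using hcast
  have hp' : (g : ZMod p) ^ (2*t+i) = (g : ZMod p) ^ (2*s+j) := by
    have hcast := congrArg (ZMod.castHom (dvd_mul_right p q) (ZMod p)) heq
    simpa [map_mul, map_pow, map_natCast, hxp, ← pow_add] using hcast
  rw [DH1.gpow_iff hq hgq] at hq'
  rw [DH1.gpow_iff hp hgp] at hp'
  obtain ⟨u, hu⟩ := hpo
  obtain ⟨v, hv⟩ := hqo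
  have hp1 : p - 1 = 2*u := by omega
  have hq1 : q - 1 = 2*v := by omega
  have hcop : Nat.Coprime u v := by
    have hg2 : Nat.gcd (2*u) (2*v) = 2 * Nat.gcd u v := Nat.gcd_mul_left 2 u v
    rw [hp1, hq1] at hgcd
    rw [hg2] at hgcd
    unfold Nat.Coprime
    omega
  have hij : i = j := by
    have h2 : (2:ℕ) ∣ p - 1 := ⟨u, hp1⟩
    have h3 : (2*t+i) % 2 = (2*s+j) % 2 := Nat.ModEq.of_dvd h2 hp'
    omega
  subst hij
  have hp2 : 2*t ≡ 2*s [MOD p-1] := Nat.ModEq.add_right_cancel' i hp'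
  have htu : t % u = s % u := by
    have h5 : (2*t) % (2*u) = (2*s) % (2*u) := by rw [← hp1]; exact hp2
    rw [Nat.mul_mod_mul_left, Nat.mul_mod_mul_left] at h5
    omega
  have htv : t % v = s % v := by
    have h5 : (2*t) % (2*v) = (2*s) % (2*v) := by rw [← hq1]; exact hq'
    rw [Nat.mul_mod_mul_left, Nat.mul_mod_mul_left] at h5
    omega
  have huv : t ≡ s [MOD u*v] := (Nat.modEq_and_modEq_iff_modEq_mul hcop).mp ⟨htu, htv⟩
  have he1 : (p-1)/2 = u := by omega
  have he2 : (q-1)/2 = v := by omega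
  rw [he1, he2] at ht hs
  have hts : t = s := by
    have h6 : t % (u*v) = s % (u*v) := huv
    rwa [Nat.mod_eq_of_lt ht, Nat.mod_eq_of_lt hs] at h6
  subst hts
  rfl

lemma DH1.gN_unit {p q g : ℕ} (hp : Nat.Prime p) (hq : Nat.Prime q)
    (hgp : orderOf (g : ZMod p) = p - 1) (hgq : orderOf (g : ZMod q) = q - 1) :
    IsUnit (g : ZMod (p*q)) := by
  haveI : NeZero p := ⟨hp.pos.ne'⟩
  haveI : NeZero q := ⟨hq.pos.ne'⟩
  haveI : NeZero (p*q) := ⟨Nat.mul_ne_zero hp.pos.ne' hq.pos.ne'⟩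
  rw [ZMod.isUnit_iff_coprime]
  exact Nat.Coprime.mul_right
    ((ZMod.isUnit_iff_coprime g p).mp (DH1.unit hp hgp))
    ((ZMod.isUnit_iff_coprime g q).mp (DH1.unit hq hgq))

lemma DH1.xN_unit {p q g x : ℕ} (hp : Nat.Prime p) (hq : Nat.Prime q)
    (hgp : orderOf (g : ZMod p) = p - 1)
    (hxp : (x : ZMod p) = (g : ZMod p)) (hxq : (x : ZMod q) = 1) :
    IsUnit (x : ZMod (p*q)) := by
  haveI : NeZero p := ⟨hp.pos.ne'⟩
  haveI : NeZero q := ⟨hq.pos.ne'⟩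
  haveI : NeZero (p*q) := ⟨Nat.mul_ne_zero hp.pos.ne' hq.pos.ne'⟩
  rw [ZMod.isUnit_iff_coprime]
  refine Nat.Coprime.mul_right ?_ ?_
  · exact (ZMod.isUnit_iff_coprime x p).mp (by rw [hxp]; exact DH1.unit hp hgp)
  · exact (ZMod.isUnit_iff_coprime x q).mp (by rw [hxq]; exact isUnit_one)

lemma DH1.D1_unit {p q g x : ℕ} (hp : Nat.Prime p) (hq : Nat.Prime q)
    (hgp : orderOf (g : ZMod p) = p - 1) (hgq : orderOf (g : ZMod q) = q - 1)
    (hxp : (x : ZMod p) = (g : ZMod p)) (hxq : (x : ZMod q) = 1)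
    {a : ZMod (p*q)} (ha : a ∈ DHD1 p q g x) : IsUnit a := by
  have hgNu := DH1.gN_unit hp hq hgp hgq
  have hxu := DH1.xN_unit hp hq hgp hxp hxq
  simp only [DHD1, DHD0, Finset.mem_image] at ha
  obtain ⟨d, hd, rfl⟩ := ha
  obtain ⟨ti, -, rfl⟩ := hd
  exact hgNu.mul ((hgNu.pow _).mul (hxu.pow _))

lemma DH1.P_not_unit {p q : ℕ} (hp : Nat.Prime p) (hq : Nat.Prime q)
    {a : ZMod (p*q)} (ha : a ∈ DHP p q) : ¬ IsUnit a := by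
  haveI : NeZero (p*q) := ⟨Nat.mul_ne_zero hp.pos.ne' hq.pos.ne'⟩
  simp only [DHP, Finset.mem_image] at ha
  obtain ⟨k, -, rfl⟩ := ha
  rw [ZMod.isUnit_iff_coprime]
  intro hcop
  have hdvd : p ∣ Nat.gcd (k*p) (p*q) := Nat.dvd_gcd ⟨k, mul_comm _ _⟩ ⟨q, rfl⟩
  unfold Nat.Coprime at hcop
  rw [hcop] at hdvd
  have h1 := Nat.le_of_dvd one_pos hdvd
  have := hp.two_le
  omega

lemma DH1.D1P_disj {p q g x : ℕ} (hp : Nat.Prime p) (hq : Nat.Prime q)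
    (hgp : orderOf (g : ZMod p) = p - 1) (hgq : orderOf (g : ZMod q) = q - 1)
    (hxp : (x : ZMod p) = (g : ZMod p)) (hxq : (x : ZMod q) = 1) :
    Disjoint (DHD1 p q g x) (DHP p q) :=
  Finset.disjoint_left.mpr fun _ h1 h2 =>
    DH1.P_not_unit hp hq h2 (DH1.D1_unit hp hq hgp hgq hxp hxq h1)

lemma DH1.D0_sum {p q g x : ℕ} [NeZero q] (hp : Nat.Prime p) (hq : Nat.Prime q)
    (hpo : Odd p) (hqo : Odd q) (hgcd : Nat.gcd (p-1) (q-1) = 2)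
    (hgp : orderOf (g : ZMod p) = p - 1) (hgq : orderOf (g : ZMod q) = q - 1)
    (hxp : (x : ZMod p) = (g : ZMod p)) (hxq : (x : ZMod q) = 1)
    (F : ZMod q → ℂ) :
    ∑ a ∈ DHD0 p q g x, F ((ZMod.castHom (dvd_mul_left q p) (ZMod q)) a)
      = ((p:ℂ) - 1) * ∑ c ∈ DHQR q, F c := by
  have hb : q - 1 = 2*((q-1)/2) := by obtain ⟨c, hc⟩ := hqo; omega
  simp only [DHD0]
  rw [Finset.sum_image (DH1.D0_inj hp hq hpo hqo hgcd hgp hgq hxp hxq), Finset.sum_product]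
  have hinner : ∀ t : ℕ, (∑ i ∈ Finset.range 2, F ((ZMod.castHom (dvd_mul_left q p) (ZMod q))
      ((g : ZMod (p*q)) ^ (2*t) * (x : ZMod (p*q)) ^ i)))
      = 2 * F ((g : ZMod q) ^ (2*t)) := by
    intro t
    have hsummand : ∀ i ∈ Finset.range 2, F ((ZMod.castHom (dvd_mul_left q p) (ZMod q))
        ((g : ZMod (p*q)) ^ (2*t) * (x : ZMod (p*q)) ^ i)) = F ((g : ZMod q) ^ (2*t)) := by
      intro i _
      congr 1
      rw [map_mul, map_pow, map_pow, map_natCast, map_natCast, hxq, one_pow, mul_one]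
    rw [Finset.sum_congr rfl hsummand, Finset.sum_const, Finset.card_range]
    rw [nsmul_eq_mul]
    norm_num
  rw [Finset.sum_congr rfl (fun t _ => hinner t), ← Finset.mul_sum, DH1.e2_eq hpo hqo]
  have hper : ∀ t, F ((g : ZMod q) ^ (2*(t + (q-1)/2))) = F ((g : ZMod q) ^ (2*t)) := by
    intro t
    congr 1
    rw [DH1.gpow_iff hq hgq]
    have h7 : 2*(t+(q-1)/2) = 2*t + (q-1) := by omega
    rw [h7]
    show (2*t + (q-1)) % (q-1) = (2*t) % (q-1)
    exact Nat.add_mod_right _ _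
  rw [DH1.periodic_sum (fun t => F ((g : ZMod q) ^ (2*t))) ((q-1)/2) hper ((p-1)/2)]
  rw [DH1.QR_eq (g := g) hq hqo hgq, Finset.sum_image (DH1.QR_injOn hq hqo hgq)]
  have hnat : ((p-1)/2) * 2 = p - 1 := by obtain ⟨c, hc⟩ := hpo; omega
  have hcast : (((p-1 : ℕ)) : ℂ) = (p:ℂ) - 1 := by
    rw [Nat.cast_sub hp.one_le, Nat.cast_one]
  calc 2 * ((((p-1)/2 : ℕ) : ℂ) * ∑ v ∈ Finset.range ((q-1)/2), F ((g : ZMod q) ^ (2*v)))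
      = ((((p-1)/2 * 2 : ℕ)) : ℂ) * ∑ v ∈ Finset.range ((q-1)/2), F ((g : ZMod q) ^ (2*v)) := by
        push_cast; ring
    _ = ((p:ℂ) - 1) * ∑ v ∈ Finset.range ((q-1)/2), F ((g : ZMod q) ^ (2*v)) := by
        rw [hnat, hcast]

lemma DH1.D1_sum {p q g x : ℕ} [NeZero q] (hp : Nat.Prime p) (hq : Nat.Prime q)
    (hpo : Odd p) (hqo : Odd q) (hgcd : Nat.gcd (p-1) (q-1) = 2)
    (hgp : orderOf (g : ZMod p) = p - 1) (hgq : orderOf (g : ZMod q) = q - 1)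
    (hxp : (x : ZMod p) = (g : ZMod p)) (hxq : (x : ZMod q) = 1)
    (F : ZMod q → ℂ) :
    ∑ a ∈ DHD1 p q g x, F ((ZMod.castHom (dvd_mul_left q p) (ZMod q)) a)
      = ((p:ℂ) - 1) * ∑ c ∈ DHQNR q, F c := by
  have hgu : IsUnit (g : ZMod (p*q)) := DH1.gN_unit hp hq hgp hgq
  simp only [DHD1]
  rw [Finset.sum_image (fun a _ b _ h => hgu.mul_right_injective h)]
  have hcg : ∀ d ∈ DHD0 p q g x,
      F ((ZMod.castHom (dvd_mul_left q p) (ZMod q)) ((g : ZMod (p*q)) * d))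
      = (fun c => F ((g : ZMod q) * c)) ((ZMod.castHom (dvd_mul_left q p) (ZMod q)) d) := by
    intro d _
    simp only [map_mul, map_natCast]
  rw [Finset.sum_congr rfl hcg,
    DH1.D0_sum hp hq hpo hqo hgcd hgp hgq hxp hxq (fun c => F ((g : ZMod q) * c))]
  congr 1
  rw [DH1.QR_eq (g := g) hq hqo hgq, Finset.sum_image (DH1.QR_injOn hq hqo hgq),
      DH1.NQR_eq (g := g) hq hqo hgq, Finset.sum_image (DH1.NQR_injOn hq hqo hgq)]
  exact Finset.sum_congr rfl fun v _ => by congr 1; rw [pow_succ]; ring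

end DH1Aux2
section DH1Aux3

open Finset

lemma DH1.eta_mul {q g : ℕ} [NeZero q] (hq : Nat.Prime q) (hqo : Odd q)
    (hgq : orderOf (g : ZMod q) = q - 1) {u : ZMod q} (hu : u ≠ 0) :
    ∑ c ∈ DHQNR q, DHxi q ^ (u * c).val
      = if IsSquare u then DHeta q (DHQNR q) else DHeta q (DHQR q) := by
  have hb : q - 1 = 2*((q-1)/2) := by obtain ⟨c, hc⟩ := hqo; omega
  have hgper : ∀ t : ℕ, (g : ZMod q) ^ (t + (q-1)) = (g : ZMod q) ^ t := by
    intro t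
    rw [pow_add, ← hgq, pow_orderOf_eq_one, mul_one]
  obtain ⟨m, -, rfl⟩ := DH1.dlog hq hgq hu
  rw [DH1.NQR_eq (g := g) hq hqo hgq, Finset.sum_image (DH1.NQR_injOn hq hqo hgq)]
  rcases Nat.even_or_odd m with ⟨w, rfl⟩ | hodd
  · rw [if_pos ⟨(g : ZMod q)^w, pow_add _ w w⟩]
    rw [DHeta, Finset.sum_image (DH1.NQR_injOn hq hqo hgq)]
    have hshift := DH1.periodic_shift (fun t => DHxi q ^ (((g : ZMod q) ^ (2*t+1)).val))
      ((q-1)/2) (fun t => by rw [show 2*(t+(q-1)/2)+1 = (2*t+1) + (q-1) by omega, hgper]) w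
    calc ∑ v ∈ Finset.range ((q-1)/2), DHxi q ^ (((g : ZMod q)^(w+w)) * (g : ZMod q)^(2*v+1)).val
        = ∑ v ∈ Finset.range ((q-1)/2), DHxi q ^ (((g : ZMod q)^(2*(w+v)+1)).val) := by
          refine Finset.sum_congr rfl fun v _ => ?_
          rw [← pow_add, show (w+w) + (2*v+1) = 2*(w+v)+1 by ring]
      _ = _ := hshift
  · obtain ⟨w, rfl⟩ := hodd
    rw [if_neg (by rintro ⟨r, hr⟩; exact DH1.odd_pow_not_sq hq hqo hgq w ⟨r, hr.symm⟩)]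
    rw [DHeta, DH1.QR_eq (g := g) hq hqo hgq, Finset.sum_image (DH1.QR_injOn hq hqo hgq)]
    have hshift := DH1.periodic_shift (fun t => DHxi q ^ (((g : ZMod q) ^ (2*t)).val))
      ((q-1)/2) (fun t => by rw [show 2*(t+(q-1)/2) = (2*t) + (q-1) by omega, hgper]) (w+1)
    calc ∑ v ∈ Finset.range ((q-1)/2), DHxi q ^ (((g : ZMod q)^(2*w+1)) * (g : ZMod q)^(2*v+1)).val
        = ∑ v ∈ Finset.range ((q-1)/2), DHxi q ^ (((g : ZMod q)^(2*((w+1)+v))).val) := by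
          refine Finset.sum_congr rfl fun v _ => ?_
          rw [← pow_add, show (2*w+1) + (2*v+1) = 2*((w+1)+v) by ring]
      _ = _ := hshift

lemma DH1.P_val {p q : ℕ} (hp : 0 < p) (hq2 : 2 ≤ q) {k : ℕ}
    (hk : k ∈ Finset.Icc 1 (q-1)) : ((k*p : ℕ) : ZMod (p*q)).val = k * p := by
  apply ZMod.val_cast_of_lt
  simp only [Finset.mem_Icc] at hk
  have h1 : k * p < q * p := mul_lt_mul_of_pos_right (show k < q by omega) hp
  rwa [mul_comm q p] at h1

lemma DH1.P_inj {p q : ℕ} (hp : 0 < p) (hq2 : 2 ≤ q) :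
    ∀ a ∈ Finset.Icc 1 (q-1), ∀ b ∈ Finset.Icc 1 (q-1),
      ((a*p : ℕ) : ZMod (p*q)) = ((b*p : ℕ) : ZMod (p*q)) → a = b := by
  intro a ha b hb h
  have hv := congrArg ZMod.val h
  rw [DH1.P_val hp hq2 ha, DH1.P_val hp hq2 hb] at hv
  exact Nat.eq_of_mul_eq_mul_right hp hv

lemma DH1.P_sum {p q : ℕ} (hp : Nat.Prime p) (hq : Nat.Prime q) (hpq : p < q)
    {k : ℕ} (hk : k ∈ Finset.Icc 1 (q-1)) :
    ∑ a ∈ DHP p q, (DHxi q ^ k) ^ a.val = -1 := by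
  have hq2 := hq.two_le
  simp only [DHP]
  rw [Finset.sum_image (DH1.P_inj hp.pos hq2)]
  simp only [Finset.mem_Icc] at hk
  have hcongr : ∀ k' ∈ Finset.Icc 1 (q-1),
      (DHxi q ^ k) ^ (((k'*p : ℕ) : ZMod (p*q)).val) = (DHxi q ^ (k*p)) ^ k' := by
    intro k' hk'
    rw [DH1.P_val hp.pos hq2 hk', ← pow_mul, ← pow_mul]
    congr 1
    ring
  rw [Finset.sum_congr rfl hcongr]
  set ζ := DHxi q ^ (k*p) with hζdef
  have hζq : ζ ^ q = 1 := by
    rw [hζdef, ← pow_mul, show k*p*q = q*(k*p) by ring, pow_mul,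
      DH1.omega_pow_q hq.pos.ne', one_pow]
  have hζ1 : ζ ≠ 1 := by
    intro h1
    have hdvd : q ∣ k*p := ((DH1.isPrim hq.pos.ne').pow_eq_one_iff_dvd (k*p)).mp h1
    rcases (Nat.Prime.dvd_mul hq).mp hdvd with h | h
    · exact absurd (Nat.le_of_dvd (by omega) h) (by omega)
    · exact absurd (Nat.le_of_dvd hp.pos h) (by omega)
  have hIcc : Finset.Icc 1 (q-1) = Finset.Ico 1 q := by
    rw [← Finset.Ico_add_one_right_eq_Icc]
    congr 1
    omega
  rw [hIcc]
  have h1 : ∑ i ∈ Finset.Ico 0 1, ζ^i + ∑ i ∈ Finset.Ico 1 q, ζ^i = ∑ i ∈ Finset.Ico 0 q, ζ^i :=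
    Finset.sum_Ico_consecutive _ (by omega) (by omega)
  have h2 : ∑ i ∈ Finset.Ico 0 q, ζ ^ i = 0 := by
    rw [← Finset.range_eq_Ico]
    exact DH1.geom_zero hq.one_lt hζ1 hζq
  have h3 : ∑ i ∈ Finset.Ico 0 1, ζ^i = 1 := by norm_num
  rw [h2, h3] at h1
  linear_combination h1

lemma DH1.Sval {p q g x : ℕ} [NeZero q] (hp : Nat.Prime p) (hq : Nat.Prime q)
    (hpo : Odd p) (hqo : Odd q) (hpq : p < q) (hgcd : Nat.gcd (p-1) (q-1) = 2)
    (hgp : orderOf (g : ZMod p) = p - 1) (hgq : orderOf (g : ZMod q) = q - 1)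
    (hxp : (x : ZMod p) = (g : ZMod p)) (hxq : (x : ZMod q) = 1)
    {k : ℕ} (hk : k ∈ Finset.Icc 1 (q-1)) :
    DHSval1 p q g x (DHxi q ^ k)
      = ((p:ℂ) - 1) * (if IsSquare ((k : ZMod q)) then DHeta q (DHQNR q) else DHeta q (DHQR q))
        - 1 := by
  haveI : NeZero (p*q) := ⟨Nat.mul_ne_zero hp.pos.ne' hq.pos.ne'⟩
  have hkk := hk
  simp only [Finset.mem_Icc] at hkk
  have hku : (k : ZMod q) ≠ 0 := by
    intro h0
    have hv : ((k : ZMod q)).val = k := ZMod.val_cast_of_lt (by have := hq.two_le; omega)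
    rw [h0, ZMod.val_zero] at hv
    omega
  simp only [DHSval1]
  have hsummand : ∀ i ∈ Finset.range (p*q), ((DHs1 p q g x i : ℕ) : ℂ) * (DHxi q ^ k) ^ i
      = if (i : ZMod (p*q)) ∈ DHD1 p q g x ∪ DHP p q then (DHxi q ^ k) ^ i else 0 := by
    intro i _
    simp only [DHs1]
    split <;> simp
  rw [Finset.sum_congr rfl hsummand, ← Finset.sum_filter]
  have hre : ∑ i ∈ (Finset.range (p*q)).filter
        (fun i : ℕ => ((↑i : ZMod (p*q)) ∈ DHD1 p q g x ∪ DHP p q)), (DHxi q ^ k) ^ i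
      = ∑ a ∈ DHD1 p q g x ∪ DHP p q, (DHxi q ^ k) ^ a.val := by
    refine Finset.sum_nbij' (fun i : ℕ => ((↑i : ZMod (p*q)))) (fun a => a.val) ?_ ?_ ?_ ?_ ?_
    · intro i hi
      exact (Finset.mem_filter.mp hi).2
    · intro a ha
      refine Finset.mem_filter.mpr ⟨Finset.mem_range.mpr (ZMod.val_lt a), ?_⟩
      rw [ZMod.natCast_val, ZMod.cast_id]
      exact ha
    · intro i hi
      exact ZMod.val_cast_of_lt (Finset.mem_range.mp (Finset.mem_filter.mp hi).1)
    · intro a _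
      simp [ZMod.natCast_val, ZMod.cast_id]
    · intro i hi
      rw [ZMod.val_cast_of_lt (Finset.mem_range.mp (Finset.mem_filter.mp hi).1)]
  rw [hre, Finset.sum_union (DH1.D1P_disj hp hq hgp hgq hxp hxq)]
  have hD1 : ∀ a ∈ DHD1 p q g x, (DHxi q ^ k) ^ a.val
      = (fun c => DHxi q ^ (((k : ZMod q)) * c).val)
          ((ZMod.castHom (dvd_mul_left q p) (ZMod q)) a) := by
    intro a _
    simp only
    rw [← pow_mul, DH1.psi_natCast (q := q) (k * a.val)]
    congr 2
    rw [Nat.cast_mul, ZMod.natCast_val, ZMod.castHom_apply]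
  rw [Finset.sum_congr rfl hD1,
    DH1.D1_sum hp hq hpo hqo hgcd hgp hgq hxp hxq (fun c => DHxi q ^ (((k : ZMod q)) * c).val),
    DH1.eta_mul hq hqo hgq hku, DH1.P_sum hp hq hpq hk]
  ring

end DH1Aux3
theorem stmt11 (p q g x : ℕ) [NeZero q] (hp : Nat.Prime p) (hq : Nat.Prime q)
    (hpo : Odd p) (hqo : Odd q) (hpq : p < q)
    (hgcd : Nat.gcd (p - 1) (q - 1) = 2)
    (hgp : orderOf (g : ZMod p) = p - 1) (hgq : orderOf (g : ZMod q) = q - 1)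
    (hxp : (x : ZMod p) = (g : ZMod p)) (hxq : (x : ZMod q) = 1) :
    ∏ a ∈ DHP p q, DHSval1 p q g x (DHxi (p * q) ^ a.val) =
      (((p : ℂ) - 1) ^ 2 * DHeta q (DHQR q) * DHeta q (DHQNR q) + (p : ℂ)) ^
        ((q - 1) / 2) := by
  haveI : NeZero (p*q) := ⟨Nat.mul_ne_zero hp.pos.ne' hq.pos.ne'⟩
  have hq2 := hq.two_le
  rw [show DHP p q = (Finset.Icc 1 (q-1)).image (fun k => ((k * p : ℕ) : ZMod (p * q))) from rfl,
    Finset.prod_image (DH1.P_inj hp.pos hq2)]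
  have hfac : ∀ k' ∈ Finset.Icc 1 (q-1),
      DHSval1 p q g x (DHxi (p*q) ^ (((k'*p : ℕ) : ZMod (p*q)).val))
        = ((p:ℂ) - 1) * (if IsSquare ((k' : ZMod q)) then DHeta q (DHQNR q) else DHeta q (DHQR q))
          - 1 := by
    intro k' hk'
    rw [DH1.P_val hp.pos hq2 hk', show k' * p = p * k' from mul_comm _ _, pow_mul,
      DH1.dhxi_pow_p hp.pos.ne' hq.pos.ne']
    exact DH1.Sval hp hq hpo hqo hpq hgcd hgp hgq hxp hxq hk'
  rw [Finset.prod_congr rfl hfac]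
  have hre : ∏ k' ∈ Finset.Icc 1 (q-1),
      (((p:ℂ)-1) * (if IsSquare ((k' : ZMod q)) then DHeta q (DHQNR q) else DHeta q (DHQR q)) - 1)
      = ∏ u ∈ Finset.univ.filter (fun u : ZMod q => u ≠ 0),
          (((p:ℂ)-1) * (if IsSquare u then DHeta q (DHQNR q) else DHeta q (DHQR q)) - 1) := by
    refine Finset.prod_nbij' (fun k' : ℕ => ((↑k' : ZMod q))) (fun u => u.val) ?_ ?_ ?_ ?_ ?_
    · intro k' hk'
      simp only [Finset.mem_Icc] at hk'
      simp only [Finset.mem_filter, Finset.mem_univ, true_and]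
      intro h0
      have hv : ((k' : ZMod q)).val = k' := ZMod.val_cast_of_lt (by omega)
      rw [h0, ZMod.val_zero] at hv
      omega
    · intro u hu
      simp only [Finset.mem_filter, Finset.mem_univ, true_and] at hu
      simp only [Finset.mem_Icc]
      have h1 := ZMod.val_lt u
      have h2 : u.val ≠ 0 := by
        intro h
        apply hu
        have : ((u.val : ℕ) : ZMod q) = u := by simp [ZMod.natCast_val, ZMod.cast_id]
        rw [← this, h, Nat.cast_zero]
      omega
    · intro k' hk'
      simp only [Finset.mem_Icc] at hk'
      exact ZMod.val_cast_of_lt (by omega)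
    · intro u _
      simp [ZMod.natCast_val, ZMod.cast_id]
    · intro k' _
      rfl
  rw [hre, DH1.QR_union q, Finset.prod_union (DH1.QRdisj q)]
  have hQRf : ∀ u ∈ DHQR q,
      (((p:ℂ)-1) * (if IsSquare u then DHeta q (DHQNR q) else DHeta q (DHQR q)) - 1)
        = ((p:ℂ)-1) * DHeta q (DHQNR q) - 1 := by
    intro u hu
    simp only [DHQR, Finset.mem_filter, Finset.mem_univ, true_and] at hu
    obtain ⟨-, b, hb⟩ := hu
    rw [if_pos ⟨b, hb.symm⟩]
  have hNf : ∀ u ∈ DHQNR q,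
      (((p:ℂ)-1) * (if IsSquare u then DHeta q (DHQNR q) else DHeta q (DHQR q)) - 1)
        = ((p:ℂ)-1) * DHeta q (DHQR q) - 1 := by
    intro u hu
    simp only [DHQNR, Finset.mem_filter, Finset.mem_univ, true_and] at hu
    rw [if_neg]
    rintro ⟨r, hr⟩
    exact hu.2 ⟨r, hr.symm⟩
  rw [Finset.prod_congr rfl hQRf, Finset.prod_congr rfl hNf, Finset.prod_const, Finset.prod_const,
    DH1.QR_card (g := g) hq hqo hgq, DH1.NQR_card (g := g) hq hqo hgq, ← mul_pow]
  congr 1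
  have hsum := DH1.eta_sum (q := q) hq
  linear_combination (1 - (p:ℂ)) * hsum
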